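/- Let A be a unital C*-algebra with a state φ, let L be a unital C*-subalgebra of A on which φ is tracial (φ(ab) = φ(ba) for all a, b ∈ L), and let y ∈ A be a self-adjoint element commuting with every element of L. Then for all self-adjoint x₁, x₁', x₂ ∈ L, |φ(x₁x₂y) − φ(x₁'x₂y)| ≤ ‖y‖·‖x₂‖·φ((x₁ − x₁')²)^{1/2}. -/

import Mathlib

open scoped ComplexOrder

/-- Key estimate for the bi-free Wasserstein semimetric: if `φ` is a state on a unital
C*-algebra `A`, tracial on a unital C*-subalgebra `S`, and `y` is a self-adjoint element
commuting with `S`, then for self-adjoint `x₁, x₁', x₂ ∈ S`,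
`|φ(x₁x₂y) − φ(x₁'x₂y)| ≤ ‖y‖·‖x₂‖·φ((x₁ − x₁')²)^{1/2}`. -/
theorem wasserstein_key_estimate {A : Type*} [NormedRing A] [CompleteSpace A]
    [StarRing A] [CStarRing A] [NormedAlgebra ℂ A] [StarModule ℂ A]
    (φ : A →L[ℂ] ℂ) (hφ1 : φ 1 = 1) (hφnorm : ‖φ‖ = 1)
    (hφpos : ∀ a : A, 0 ≤ φ (star a * a))
    (S : StarSubalgebra ℂ A) (hSclosed : IsClosed (S : Set A))
    (hφtr : ∀ a b : A, a ∈ S → b ∈ S → φ (a * b) = φ (b * a))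
    (y : A) (hy : IsSelfAdjoint y) (hyS : ∀ a ∈ S, Commute y a)
    (x₁ x₁' x₂ : A) (hx₁ : x₁ ∈ S) (hx₁' : x₁' ∈ S) (hx₂ : x₂ ∈ S)
    (hx₁sa : IsSelfAdjoint x₁) (hx₁'sa : IsSelfAdjoint x₁')
    (hx₂sa : IsSelfAdjoint x₂) :
    ‖φ (x₁ * x₂ * y) - φ (x₁' * x₂ * y)‖
      ≤ ‖y‖ * ‖x₂‖ * Real.sqrt ((φ ((x₁ - x₁') ^ 2)).re) := by
  letI : CStarAlgebra A := ⟨⟩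
  letI := CStarAlgebra.spectralOrder A
  haveI := CStarAlgebra.spectralOrderedRing A
  -- basic facts from positivity
  have him : ∀ a : A, (φ (star a * a)).im = 0 := fun a =>
    ((Complex.le_def.mp (hφpos a)).2).symm
  have hre : ∀ a : A, 0 ≤ (φ (star a * a)).re := fun a => by
    simpa using (Complex.le_def.mp (hφpos a)).1
  -- φ is real on selfadjoint elements
  have hsa_real : ∀ b : A, IsSelfAdjoint b → (φ b).im = 0 := by
    intro b hb
    have e : star (1 + b) * (1 + b) = 1 + b + b + star b * b := by
      rw [star_add, star_one, hb.star_eq]; noncomm_ring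
    have h1 := him (1 + b)
    rw [e, map_add, map_add, map_add, hφ1] at h1
    simp only [Complex.add_im, Complex.one_im, him b] at h1
    linarith
  have hreal : ∀ x : A, IsSelfAdjoint x → starRingEnd ℂ (φ x) = φ x := fun x hx =>
    Complex.conj_eq_iff_im.mpr (hsa_real x hx)
  -- φ is star-preserving
  have hstar : ∀ a : A, φ (star a) = starRingEnd ℂ (φ a) := by
    intro a
    obtain ⟨b, hbdef⟩ : ∃ b : A, b = a + star a := ⟨_, rfl⟩
    obtain ⟨c, hcdef⟩ : ∃ c : A, c = Complex.I • (a - star a) := ⟨_, rfl⟩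
    have hb : IsSelfAdjoint b := by
      rw [IsSelfAdjoint, hbdef, star_add, star_star, add_comm]
    have hc : IsSelfAdjoint c := by
      rw [IsSelfAdjoint, hcdef, star_smul, star_sub, star_star, Complex.star_def,
        Complex.conj_I, neg_smul, ← smul_neg, neg_sub]
    have key1 : b - Complex.I • c = (2 : ℂ) • a := by
      calc b - Complex.I • c
          = (a + star a) - (Complex.I * Complex.I) • (a - star a) := by
            rw [hbdef, hcdef, smul_smul]
        _ = (a + star a) + (a - star a) := by
            rw [Complex.I_mul_I, neg_one_smul, sub_neg_eq_add]
        _ = (2 : ℂ) • a := by rw [two_smul]; abel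
    have key2 : b + Complex.I • c = (2 : ℂ) • star a := by
      calc b + Complex.I • c
          = (a + star a) + (Complex.I * Complex.I) • (a - star a) := by
            rw [hbdef, hcdef, smul_smul]
        _ = (a + star a) - (a - star a) := by
            rw [Complex.I_mul_I, neg_one_smul]; abel
        _ = (2 : ℂ) • star a := by rw [two_smul]; abel
    have e1 : φ b - Complex.I * φ c = 2 * φ a := by
      have := congrArg φ key1
      rwa [map_sub, map_smul, map_smul, smul_eq_mul, smul_eq_mul] at this
    have e2 : φ b + Complex.I * φ c = 2 * φ (star a) := by
      have := congrArg φ key2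
      rwa [map_add, map_smul, map_smul, smul_eq_mul, smul_eq_mul] at this
    have e3 : starRingEnd ℂ (2 * φ a) = φ b + Complex.I * φ c := by
      rw [← e1, map_sub, map_mul, Complex.conj_I, hreal b hb, hreal c hc]
      ring
    have : 2 * φ (star a) = 2 * starRingEnd ℂ (φ a) := by
      rw [← e2, ← e3, map_mul, map_ofNat]
    have h2 : (2 : ℂ) ≠ 0 := two_ne_zero
    exact mul_left_cancel₀ h2 this
  -- Cauchy–Schwarz via a pre-inner-product space structure
  letI core : PreInnerProductSpace.Core ℂ A :=
    { inner := fun u v => φ (star u * v)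
      conj_inner_symm := fun u v => by
        change starRingEnd ℂ (φ (star v * u)) = φ (star u * v)
        rw [← hstar, star_mul, star_star]
      re_inner_nonneg := fun u => hre u
      add_left := fun u v w => by
        change φ (star (u + v) * w) = φ (star u * w) + φ (star v * w)
        rw [star_add, add_mul, map_add]
      smul_left := fun u v r => by
        change φ (star (r • u) * v) = starRingEnd ℂ r * φ (star u * v)
        rw [star_smul, smul_mul_assoc, map_smul, smul_eq_mul, starRingEnd_apply] }
  obtain ⟨d, hddef⟩ : ∃ d : A, d = x₁ - x₁' := ⟨_, rfl⟩
  have hd : IsSelfAdjoint d := hddef ▸ hx₁sa.sub hx₁'sa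
  obtain ⟨b, hbdef2⟩ : ∃ b : A, b = x₂ * y := ⟨_, rfl⟩
  rw [← hddef]
  have cs : ‖φ (star d * b)‖ * ‖φ (star b * d)‖
      ≤ (φ (star d * d)).re * (φ (star b * b)).re :=
    InnerProductSpace.Core.inner_mul_inner_self_le (𝕜 := ℂ) (F := A) (c := core) d b
  have hsym : ‖φ (star b * d)‖ = ‖φ (star d * b)‖ := by
    rw [show star b * d = star (star d * b) by rw [star_mul, star_star], hstar]
    exact RCLike.norm_conj _
  -- monotonicity of φ with respect to the spectral order
  have hmono : ∀ u v : A, u ≤ v → (φ u).re ≤ (φ v).re := by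
    intro u v huv
    have h0 : (0 : A) ≤ v - u := sub_nonneg.mpr huv
    have hs : star (CFC.sqrt (v - u)) * CFC.sqrt (v - u) = v - u := by
      rw [(IsSelfAdjoint.of_nonneg (CFC.sqrt_nonneg _)).star_eq,
        CFC.sqrt_mul_sqrt_self _ h0]
    have h2 := hre (CFC.sqrt (v - u))
    rw [hs, map_sub] at h2
    simp only [Complex.sub_re] at h2
    linarith
  -- bound on φ (star b * b)
  have hsbb : star b * b = star y * (x₂ * x₂) * y := by
    rw [hbdef2, star_mul, hy.star_eq, hx₂sa.star_eq]
    noncomm_ring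
  have hx2le : x₂ * x₂ ≤ algebraMap ℝ A (‖x₂‖ ^ 2) := by
    have := CStarAlgebra.star_mul_le_algebraMap_norm_sq (A := A) (a := x₂)
    rwa [hx₂sa.star_eq] at this
  have hconj : star y * (x₂ * x₂) * y ≤ (‖x₂‖ ^ 2 : ℝ) • (star y * y) := by
    have h := star_left_conjugate_le_conjugate hx2le y
    rwa [Algebra.algebraMap_eq_smul_one, mul_smul_comm, smul_mul_assoc, mul_one] at h
  have hyy : (φ (star y * y)).re ≤ ‖y‖ ^ 2 := by
    calc (φ (star y * y)).re ≤ ‖φ (star y * y)‖ := Complex.re_le_norm _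
      _ ≤ ‖φ‖ * ‖star y * y‖ := φ.le_opNorm _
      _ = ‖y‖ ^ 2 := by rw [hφnorm, one_mul, CStarRing.norm_star_mul_self, sq]
  have hBbound : (φ (star b * b)).re ≤ (‖y‖ * ‖x₂‖) ^ 2 := by
    rw [hsbb]
    calc (φ (star y * (x₂ * x₂) * y)).re
        ≤ (φ ((‖x₂‖ ^ 2 : ℝ) • (star y * y))).re := hmono _ _ hconj
      _ = ‖x₂‖ ^ 2 * (φ (star y * y)).re := by
          rw [φ.map_smul_of_tower, Complex.smul_re, smul_eq_mul]
      _ ≤ ‖x₂‖ ^ 2 * ‖y‖ ^ 2 := mul_le_mul_of_nonneg_left hyy (by positivity)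
      _ = (‖y‖ * ‖x₂‖) ^ 2 := by ring
  -- nonnegativity of φ(d²)
  have hdd : star d * d = d ^ 2 := by rw [hd.star_eq, sq]
  have hdd_nonneg : 0 ≤ (φ (d ^ 2)).re := by
    have := hre d
    rwa [hdd] at this
  -- assemble
  have hsub : φ (x₁ * x₂ * y) - φ (x₁' * x₂ * y) = φ (star d * b) := by
    rw [← map_sub]
    congr 1
    rw [hd.star_eq, hddef, hbdef2]
    noncomm_ring
  rw [hsub]
  have key : ‖φ (star d * b)‖ ^ 2 ≤ (φ (d ^ 2)).re * (‖y‖ * ‖x₂‖) ^ 2 := by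
    rw [hsym, ← sq, hdd] at cs
    calc ‖φ (star d * b)‖ ^ 2 ≤ (φ (d ^ 2)).re * (φ (star b * b)).re := cs
      _ ≤ (φ (d ^ 2)).re * (‖y‖ * ‖x₂‖) ^ 2 :=
          mul_le_mul_of_nonneg_left hBbound hdd_nonneg
  have hfin := Real.sqrt_le_sqrt key
  rw [Real.sqrt_sq (norm_nonneg _), Real.sqrt_mul hdd_nonneg,
    Real.sqrt_sq (by positivity)] at hfin
  linarith
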